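/- Let G be a topological group admitting an open neighborhood U of the identity such that every element of U other than the identity has infinite order. Then every compact subgroup K of G whose subspace topology is Hausdorff and totally disconnected is virtually torsion-free; that is, K contains a torsion-free subgroup of finite index in K. -/

import Mathlib

/-- If a topological group has an open neighborhood of the identity all of
whose non-identity elements have infinite order, then every compact subgroup
whose subspace topology is Hausdorff and totally disconnected is virtually
torsion-free. -/
theorem stmt_6 (G : Type*) [Group G] [TopologicalSpace G] [IsTopologicalGroup G]
    (U : Set G) (hU : IsOpen U) (h1 : (1 : G) ∈ U)
    (hUtf : ∀ u ∈ U, u ≠ 1 → ¬ IsOfFinOrder u)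
    (K : Subgroup G) (hK : IsCompact (K : Set G))
    (h2 : T2Space K) (htd : TotallyDisconnectedSpace K) :
    ∃ K' : Subgroup K, Finite (K ⧸ K') ∧
      ∀ x : K, x ∈ K' → IsOfFinOrder x → x = 1 := by
  have hcs : CompactSpace K := isCompact_iff_compactSpace.mp hK
  -- V : preimage of U in K is open and contains 1
  have hVopen : IsOpen ((↑) ⁻¹' U : Set K) := hU.preimage continuous_subtype_val
  have h1K : (1 : K) ∈ ((↑) ⁻¹' U : Set K) := by
    simp only [Set.mem_preimage, OneMemClass.coe_one]; exact h1
  obtain ⟨W, hWclopen, hW1, hWsub⟩ := compact_exists_isClopen_in_isOpen hVopen h1K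
  obtain ⟨H, hH⟩ :=
    IsTopologicalGroup.exist_openSubgroup_sub_clopen_nhds_of_one hWclopen hW1
  refine ⟨H.toSubgroup, H.toSubgroup.quotient_finite_of_isOpen H.isOpen, ?_⟩
  intro x hx hfin
  by_contra hne
  have hxU : (x : G) ∈ U := hWsub (hH hx)
  have hxG : (x : G) ≠ 1 := fun h => hne (Subtype.ext h)
  exact hUtf _ hxU hxG (K.subtype.isOfFinOrder hfin)
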